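/- Let r ≥ 1, m ≥ 0 and let T be the formal power series over ℚ with constant term 1 satisfying T = 1 + x·T^{r+1}. Then 1/(1 - xT^r - x³T^{m+2r}/(1 - xT^r)) = T/(1 - (T-1)³·T^{m-r-1}) in ℚ[[x]] (interpreting negative powers of T via the inverse of the unit T). -/

import Mathlib

open PowerSeries

theorem stmt19 (r m : ℕ) (hr : 1 ≤ r) (T : PowerSeries ℚ)
    (hT0 : constantCoeff T = 1) (hT : T = 1 + X * T ^ (r + 1)) :
    (1 - X * T ^ r - X ^ 3 * T ^ (m + 2 * r) * (1 - X * T ^ r)⁻¹)⁻¹ =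
      T * (1 - (T - 1) ^ 3 * (T ^ m * (T ^ (r + 1))⁻¹))⁻¹ := by
  have hT1 : T - 1 = X * T ^ (r + 1) := by linear_combination hT
  have hTu : T * (1 - X * T ^ r) = 1 := by
    have h1 : X * T ^ (r + 1) = X * T ^ r * T := by rw [pow_succ]; ring
    linear_combination hT1 + h1
  have hc1 : constantCoeff (1 - X * T ^ r) ≠ 0 := by
    simp [map_sub, map_mul]
  have hinv : (1 - X * T ^ r)⁻¹ = T :=
    ((PowerSeries.eq_inv_iff_mul_eq_one hc1).mpr hTu).symm
  have hcTpow : constantCoeff (T ^ (r + 1)) ≠ 0 := by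
    simp [map_pow, hT0]
  have hTpow : T ^ (r + 1) * (T ^ (r + 1))⁻¹ = 1 :=
    PowerSeries.mul_inv_cancel _ hcTpow
  have h3 : (T - 1) ^ 3 * T ^ m = X ^ 3 * T ^ (m + 2 * r + 2) * T ^ (r + 1) := by
    rw [hT1, mul_pow, ← pow_mul, mul_assoc, ← pow_add, mul_assoc, ← pow_add]
    congr 2
    ring
  have hkey : (T - 1) ^ 3 * (T ^ m * (T ^ (r + 1))⁻¹) = X ^ 3 * T ^ (m + 2 * r + 2) := by
    calc (T - 1) ^ 3 * (T ^ m * (T ^ (r + 1))⁻¹)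
        = ((T - 1) ^ 3 * T ^ m) * (T ^ (r + 1))⁻¹ := by ring
      _ = X ^ 3 * T ^ (m + 2 * r + 2) * (T ^ (r + 1) * (T ^ (r + 1))⁻¹) := by
          rw [h3]; ring
      _ = X ^ 3 * T ^ (m + 2 * r + 2) := by rw [hTpow, mul_one]
  set D : PowerSeries ℚ := 1 - X ^ 3 * T ^ (m + 2 * r + 2) with hD
  have hcD : constantCoeff D ≠ 0 := by
    simp [hD, map_sub, map_mul, map_pow]
  have hDinv : D * D⁻¹ = 1 := PowerSeries.mul_inv_cancel _ hcD
  have hstep : X ^ 3 * T ^ (m + 2 * r + 2) = X ^ 3 * T ^ (m + 2 * r + 1) * T := by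
    rw [mul_assoc, ← pow_succ]
  have hstep2 : X ^ 3 * T ^ (m + 2 * r + 1) = X ^ 3 * T ^ (m + 2 * r) * T := by
    rw [mul_assoc, ← pow_succ]
  have hA : 1 - X * T ^ r - X ^ 3 * T ^ (m + 2 * r) * (1 - X * T ^ r)⁻¹
      = (1 - X * T ^ r) * D := by
    rw [hinv, hD]
    have hmul : (1 - X * T ^ r) * (X ^ 3 * T ^ (m + 2 * r + 2))
        = X ^ 3 * T ^ (m + 2 * r + 1) := by
      calc (1 - X * T ^ r) * (X ^ 3 * T ^ (m + 2 * r + 2))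
          = X ^ 3 * T ^ (m + 2 * r + 1) * (T * (1 - X * T ^ r)) := by
            rw [hstep]; ring
        _ = X ^ 3 * T ^ (m + 2 * r + 1) := by rw [hTu, mul_one]
    linear_combination hmul + hstep2
  rw [hA, hkey, ← hD]
  have hcA : constantCoeff ((1 - X * T ^ r) * D) ≠ 0 := by
    rw [map_mul]; exact mul_ne_zero hc1 hcD
  rw [eq_comm, PowerSeries.eq_inv_iff_mul_eq_one hcA]
  calc T * D⁻¹ * ((1 - X * T ^ r) * D)
      = (T * (1 - X * T ^ r)) * (D * D⁻¹) := by ring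
    _ = 1 := by rw [hTu, hDinv, mul_one]
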